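/- Let P and Q be 2-qubit Pauli strings with P ≠ Q. Then the sum over all 16 2-qubit Pauli strings V of (V·P·V†) ⊗ (V·Q·V†) (Kronecker product of 4×4 matrices, giving a 16×16 complex matrix) equals the zero matrix. -/

import Mathlib

open Matrix Kronecker

/-- Labels for the four single-qubit Pauli matrices. -/
inductive PauliLabel : Type
  | I | X | Y | Z
  deriving DecidableEq

instance : Fintype PauliLabel :=
  ⟨{PauliLabel.I, PauliLabel.X, PauliLabel.Y, PauliLabel.Z}, fun x => by cases x <;> simp⟩

/-- The single-qubit Pauli matrices over `ℂ`. -/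
noncomputable def pauliMat : PauliLabel → Matrix (Fin 2) (Fin 2) ℂ
  | PauliLabel.I => !![1, 0; 0, 1]
  | PauliLabel.X => !![0, 1; 1, 0]
  | PauliLabel.Y => !![0, -Complex.I; Complex.I, 0]
  | PauliLabel.Z => !![1, 0; 0, -1]

/-- The 2-qubit Pauli string `σ_{a 0} ⊗ σ_{a 1}`, as a `4 × 4` matrix indexed by
`Fin 2 → Fin 2` (entries of a Kronecker product are products of entries). -/
noncomputable def pauliString (a : Fin 2 → PauliLabel) :
    Matrix (Fin 2 → Fin 2) (Fin 2 → Fin 2) ℂ :=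
  Matrix.of fun x y => ∏ j, pauliMat (a j) (x j) (y j)

/-- Sign of conjugation of one Pauli by another. -/
def pSgn (v p : PauliLabel) : ℤ :=
  if v = PauliLabel.I ∨ p = PauliLabel.I ∨ v = p then 1 else -1

lemma pauli_conj (v p : PauliLabel) :
    pauliMat v * pauliMat p * (pauliMat v)ᴴ = (pSgn v p : ℂ) • pauliMat p := by
  cases v <;> cases p <;>
    · ext i j
      fin_cases i <;> fin_cases j <;>
        simp [pauliMat, pSgn, Matrix.mul_apply, Fin.sum_univ_two, Complex.ext_iff]

lemma pSgn_sum {p q : PauliLabel} (h : p ≠ q) :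
    ∑ v : PauliLabel, pSgn v p * pSgn v q = 0 := by
  revert h; revert p q; decide

/-- A general "product string" of `2×2` matrices. -/
noncomputable def mString (M : Fin 2 → Matrix (Fin 2) (Fin 2) ℂ) :
    Matrix (Fin 2 → Fin 2) (Fin 2 → Fin 2) ℂ :=
  Matrix.of fun x y => ∏ j, M j (x j) (y j)

lemma pauliString_eq (a : Fin 2 → PauliLabel) :
    pauliString a = mString fun j => pauliMat (a j) := rfl

lemma mString_mul (M N : Fin 2 → Matrix (Fin 2) (Fin 2) ℂ) :
    mString M * mString N = mString fun j => M j * N j := by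
  ext x y
  simp only [mString, Matrix.mul_apply, Matrix.of_apply, ← Finset.prod_mul_distrib]
  exact (Fintype.prod_sum fun j z => M j (x j) z * N j z (y j)).symm

lemma mString_conjTranspose (M : Fin 2 → Matrix (Fin 2) (Fin 2) ℂ) :
    (mString M)ᴴ = mString fun j => (M j)ᴴ := by
  ext x y
  simp [mString, Matrix.conjTranspose_apply]

lemma mString_smul (c : Fin 2 → ℂ) (M : Fin 2 → Matrix (Fin 2) (Fin 2) ℂ) :
    (mString fun j => c j • M j) = (∏ j, c j) • mString M := by
  ext x y
  simp [mString, Finset.prod_mul_distrib, mul_comm]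

lemma string_conj (V P : Fin 2 → PauliLabel) :
    pauliString V * pauliString P * (pauliString V)ᴴ
      = (∏ j, (pSgn (V j) (P j) : ℂ)) • pauliString P := by
  rw [pauliString_eq, pauliString_eq, mString_conjTranspose, mString_mul, mString_mul]
  rw [show (fun j => pauliMat (V j) * pauliMat (P j) * (pauliMat (V j))ᴴ)
      = fun j => (pSgn (V j) (P j) : ℂ) • pauliMat (P j) from funext fun j => pauli_conj _ _]
  rw [mString_smul]

theorem pauli_conjugation_sum_eq_zero (P Q : Fin 2 → PauliLabel) (hPQ : P ≠ Q) :
    ∑ V : Fin 2 → PauliLabel,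
      (pauliString V * pauliString P * (pauliString V)ᴴ) ⊗ₖ
        (pauliString V * pauliString Q * (pauliString V)ᴴ) = 0 := by
  have key : ∑ V : Fin 2 → PauliLabel,
      (∏ j, (pSgn (V j) (P j) : ℂ)) * ∏ j, (pSgn (V j) (Q j) : ℂ) = 0 := by
    have : ∀ V : Fin 2 → PauliLabel,
        (∏ j, (pSgn (V j) (P j) : ℂ)) * ∏ j, (pSgn (V j) (Q j) : ℂ)
          = ∏ j, ((pSgn (V j) (P j) : ℂ) * (pSgn (V j) (Q j) : ℂ)) := fun V =>
      (Finset.prod_mul_distrib).symm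
    simp only [this]
    rw [← Fintype.prod_sum (fun j v => ((pSgn v (P j) : ℂ) * (pSgn v (Q j) : ℂ)))]
    obtain ⟨j, hj⟩ : ∃ j, P j ≠ Q j := by
      by_contra h
      push_neg at h
      exact hPQ (funext h)
    apply Finset.prod_eq_zero (Finset.mem_univ j)
    exact_mod_cast pSgn_sum hj
  calc ∑ V : Fin 2 → PauliLabel,
      (pauliString V * pauliString P * (pauliString V)ᴴ) ⊗ₖ
        (pauliString V * pauliString Q * (pauliString V)ᴴ)
      = ∑ V : Fin 2 → PauliLabel,
        ((∏ j, (pSgn (V j) (P j) : ℂ)) * ∏ j, (pSgn (V j) (Q j) : ℂ)) •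
          (pauliString P ⊗ₖ pauliString Q) := by
        refine Finset.sum_congr rfl fun V _ => ?_
        rw [string_conj, string_conj, smul_kronecker, kronecker_smul, smul_smul]
    _ = 0 := by rw [← Finset.sum_smul, key, zero_smul]
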